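/- Let n ≥ 1, ε > 0, L > 0 and let v be an L-Lipschitz valuation on [0,1]. Let x, y ∈ [−1,1]^n with ∥x − y∥_∞ ≤ ε/(2nL), and write D(z) = v(I^+(z)) − v(I^-(z)). If D(x) ≥ 0 and D(y) ≤ 0, then 0 ≤ D(x) ≤ ε and −ε ≤ D(y) ≤ 0; in particular x encodes an ε-Consensus-Halving for the agent with valuation v. (Correctness kernel of the reduction from Consensus-Halving to Tucker.) -/

import Mathlib

open MeasureTheory Set

/-- A valuation `v` on `[0,1]` is `L`-Lipschitz if `|v A - v B| ≤ L · λ(A △ B)`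
for all Lebesgue-measurable `A, B ⊆ [0,1]`. -/
def LipVal (L : ℝ) (v : Set ℝ → ℝ) : Prop :=
  ∀ A B : Set ℝ, A ⊆ Icc (0:ℝ) 1 → B ⊆ Icc (0:ℝ) 1 → MeasurableSet A → MeasurableSet B →
    |v A - v B| ≤ L * (volume (symmDiff A B)).toReal

/-- The painting encoding `I⁺(x) ⊆ [0,1]` of a point `x ∈ [−1,1]^n`. -/
def paintPlus (n : ℕ) (x : Fin n → ℝ) : Set ℝ :=
  {t | t = 0 ∨ (0 < t ∧ t ≤ 1 ∧
    ((∀ ℓ : Fin n, |x ℓ| < t) ∨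
      ∃ ℓ : Fin n, t ≤ |x ℓ| ∧ 0 < x ℓ ∧ ∀ m : Fin n, ℓ < m → |x m| < t))}

/-- Correctness kernel of the reduction from Consensus-Halving to Tucker: with
`D(z) = v(I⁺(z)) − v(I⁻(z))`, if `‖x − y‖_∞ ≤ ε/(2nL)`, `D(x) ≥ 0` and `D(y) ≤ 0`,
then `0 ≤ D(x) ≤ ε` and `−ε ≤ D(y) ≤ 0`. -/
lemma paint_meas (n : ℕ) (x : Fin n → ℝ) : MeasurableSet (paintPlus n x) := by
  have h : paintPlus n x = {0} ∪ ((Ioi 0 ∩ Iic 1) ∩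
      ((⋂ ℓ, Ioi |x ℓ|) ∪
        ⋃ ℓ, (Iic (|x ℓ|) ∩ {t : ℝ | 0 < x ℓ} ∩
          ⋂ m, ({t : ℝ | (ℓ:Fin n) < m}ᶜ ∪ Ioi |x m|)))) := by
    ext t
    simp only [paintPlus, mem_setOf_eq, mem_union, mem_singleton_iff, mem_inter_iff,
      mem_Ioi, mem_Iic, mem_iInter, mem_iUnion, mem_compl_iff]
    constructor
    · rintro (rfl | ⟨h1, h2, h3 | ⟨ℓ, ha, hb, hc⟩⟩)
      · exact Or.inl rfl
      · exact Or.inr ⟨⟨h1, h2⟩, Or.inl h3⟩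
      · exact Or.inr ⟨⟨h1, h2⟩, Or.inr ⟨ℓ, ⟨ha, hb⟩, fun m => by
          by_cases hm : ℓ < m
          · exact Or.inr (hc m hm)
          · exact Or.inl hm⟩⟩
    · rintro (rfl | ⟨⟨h1, h2⟩, h3 | ⟨ℓ, ⟨ha, hb⟩, hc⟩⟩)
      · exact Or.inl rfl
      · exact Or.inr ⟨h1, h2, Or.inl h3⟩
      · exact Or.inr ⟨h1, h2, Or.inr ⟨ℓ, ha, hb, fun m hm => (hc m).resolve_left
          (not_not.mpr hm)⟩⟩
  rw [h]
  refine (measurableSet_singleton 0).union (((measurableSet_Ioi.inter measurableSet_Iic).inter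
    (MeasurableSet.union (MeasurableSet.iInter fun _ => measurableSet_Ioi)
      (MeasurableSet.iUnion fun ℓ => ((measurableSet_Iic.inter (MeasurableSet.const _)).inter
        (MeasurableSet.iInter fun m => ((MeasurableSet.const _).compl).union measurableSet_Ioi))))))

lemma paint_sub (n : ℕ) (x : Fin n → ℝ) : paintPlus n x ⊆ Icc (0:ℝ) 1 := by
  rintro t (rfl | ⟨h1, h2, -⟩)
  · exact ⟨le_refl 0, zero_le_one⟩
  · exact ⟨h1.le, h2⟩

lemma paint_iff (n : ℕ) (x y : Fin n → ℝ) (t : ℝ) (ht : 0 < t)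
    (h : ∀ ℓ, (t ≤ |x ℓ| ↔ t ≤ |y ℓ|) ∧ (t ≤ |x ℓ| → (0 < x ℓ ↔ 0 < y ℓ))) :
    t ∈ paintPlus n x ↔ t ∈ paintPlus n y := by
  simp only [paintPlus, mem_setOf_eq]
  constructor
  · rintro (rfl | ⟨h1, h2, h3 | ⟨ℓ, ha, hb, hc⟩⟩)
    · exact absurd rfl ht.ne'
    · exact Or.inr ⟨h1, h2, Or.inl fun ℓ => not_le.mp
        (fun hle => (h3 ℓ).not_ge ((h ℓ).1.mpr hle))⟩
    · exact Or.inr ⟨h1, h2, Or.inr ⟨ℓ, (h ℓ).1.mp ha, ((h ℓ).2 ha).mp hb,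
        fun m hm => not_le.mp (fun hle => (hc m hm).not_ge ((h m).1.mpr hle))⟩⟩
  · rintro (rfl | ⟨h1, h2, h3 | ⟨ℓ, ha, hb, hc⟩⟩)
    · exact absurd rfl ht.ne'
    · exact Or.inr ⟨h1, h2, Or.inl fun ℓ => not_le.mp
        (fun hle => (h3 ℓ).not_ge ((h ℓ).1.mp hle))⟩
    · exact Or.inr ⟨h1, h2, Or.inr ⟨ℓ, (h ℓ).1.mpr ha,
        ((h ℓ).2 ((h ℓ).1.mpr ha)).mpr hb,
        fun m hm => not_le.mp (fun hle => (hc m hm).not_ge ((h m).1.mp hle))⟩⟩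

lemma symmDiff_paint_sub (n : ℕ) (x y : Fin n → ℝ) :
    symmDiff (paintPlus n x) (paintPlus n y) ⊆
      ⋃ ℓ, Icc (if x ℓ * y ℓ ≤ 0 then 0 else min |x ℓ| |y ℓ|) (max |x ℓ| |y ℓ|) := by
  intro t ht
  by_contra hJ
  simp only [mem_iUnion, not_exists, mem_Icc, not_and_or, not_le] at hJ
  have ht0 : (0:ℝ) ∈ paintPlus n x := Or.inl rfl
  have ht0' : (0:ℝ) ∈ paintPlus n y := Or.inl rfl
  have htpos : 0 < t := by
    rcases lt_or_ge 0 t with h | h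
    · exact h
    rcases (Set.mem_symmDiff.mp ht) with ⟨hm, _⟩ | ⟨hm, _⟩ <;>
      rcases hm with rfl | ⟨h1, _, _⟩
    · exact absurd ht (by simp [Set.mem_symmDiff, ht0, ht0'])
    · exact h1
    · exact absurd ht (by simp [Set.mem_symmDiff, ht0, ht0'])
    · exact h1
  have hiff : t ∈ paintPlus n x ↔ t ∈ paintPlus n y := by
    refine paint_iff n x y t htpos fun ℓ => ?_
    rcases hJ ℓ with hlo | hhi
    · by_cases hsgn : x ℓ * y ℓ ≤ 0
      · rw [if_pos hsgn] at hlo; exact absurd htpos (not_lt.mpr hlo.le)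
      · rw [if_neg hsgn] at hlo
        have hxl : t ≤ |x ℓ| := (hlo.trans_le (min_le_left _ _)).le
        have hyl : t ≤ |y ℓ| := (hlo.trans_le (min_le_right _ _)).le
        have hpos : 0 < x ℓ * y ℓ := lt_of_not_ge hsgn
        rcases mul_pos_iff.mp hpos with ⟨ha, hb⟩ | ⟨ha, hb⟩
        · exact ⟨by simp [hxl, hyl], fun _ => by simp [ha, hb]⟩
        · exact ⟨by simp [hxl, hyl], fun _ => by simp [not_lt.mpr ha.le, not_lt.mpr hb.le]⟩
    · have hxl : |x ℓ| < t := (le_max_left _ _).trans_lt hhi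
      have hyl : |y ℓ| < t := (le_max_right _ _).trans_lt hhi
      exact ⟨by simp [not_le.mpr hxl, not_le.mpr hyl],
        fun h => absurd h (not_le.mpr hxl)⟩
  rcases Set.mem_symmDiff.mp ht with ⟨hm, hn⟩ | ⟨hm, hn⟩
  · exact hn (hiff.mp hm)
  · exact hn (hiff.mpr hm)

lemma paint_measure_bound (n : ℕ) (x y : Fin n → ℝ) :
    (volume (symmDiff (paintPlus n x) (paintPlus n y))).toReal ≤ ∑ ℓ, |x ℓ - y ℓ| := by
  have hlen : ∀ ℓ : Fin n,
      max |x ℓ| |y ℓ| - (if x ℓ * y ℓ ≤ 0 then 0 else min |x ℓ| |y ℓ|) ≤ |x ℓ - y ℓ| := by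
    intro ℓ
    by_cases hsgn : x ℓ * y ℓ ≤ 0
    · rw [if_pos hsgn, sub_zero]
      rcases mul_nonpos_iff.mp hsgn with ⟨ha, hb⟩ | ⟨ha, hb⟩
      · rw [abs_of_nonneg ha, abs_of_nonpos hb, abs_of_nonneg (by linarith)]
        exact max_le (by linarith) (by linarith)
      · rw [abs_of_nonpos ha, abs_of_nonneg hb, abs_of_nonpos (by linarith)]
        exact max_le (by linarith) (by linarith)
    · rw [if_neg hsgn]
      have h2 := abs_sub_abs_le_abs_sub (x ℓ) (y ℓ)
      have h3 := abs_sub_abs_le_abs_sub (y ℓ) (x ℓ)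
      rw [abs_sub_comm] at h3
      rcases le_total |x ℓ| |y ℓ| with h | h
      · rw [max_eq_right h, min_eq_left h]; linarith
      · rw [max_eq_left h, min_eq_right h]; linarith
  have h1 : volume (symmDiff (paintPlus n x) (paintPlus n y)) ≤
      ENNReal.ofReal (∑ ℓ, |x ℓ - y ℓ|) := by
    calc volume (symmDiff (paintPlus n x) (paintPlus n y))
        ≤ volume (⋃ ℓ, Icc (if x ℓ * y ℓ ≤ 0 then 0 else min |x ℓ| |y ℓ|)
            (max |x ℓ| |y ℓ|)) := measure_mono (symmDiff_paint_sub n x y)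
      _ ≤ ∑ ℓ, volume (Icc (if x ℓ * y ℓ ≤ 0 then 0 else min |x ℓ| |y ℓ|)
            (max |x ℓ| |y ℓ|)) := measure_iUnion_fintype_le _ _
      _ ≤ ∑ ℓ, ENNReal.ofReal |x ℓ - y ℓ| := by
          refine Finset.sum_le_sum fun ℓ _ => ?_
          rw [Real.volume_Icc]
          exact ENNReal.ofReal_le_ofReal (by linarith [hlen ℓ])
      _ = ENNReal.ofReal (∑ ℓ, |x ℓ - y ℓ|) := by
          rw [← ENNReal.ofReal_sum_of_nonneg fun ℓ _ => abs_nonneg _]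
  exact ENNReal.toReal_le_of_le_ofReal (Finset.sum_nonneg fun ℓ _ => abs_nonneg _) h1

lemma mySdiff_symmDiff {S A B : Set ℝ} (hA : A ⊆ S) (hB : B ⊆ S) :
    symmDiff (S \ A) (S \ B) = symmDiff A B := by
  ext t
  have h1 := @hA t
  have h2 := @hB t
  simp only [Set.mem_symmDiff, mem_diff]
  tauto

theorem stmt9 (n : ℕ) (hn : 1 ≤ n) (ε L : ℝ) (hε : 0 < ε) (hL : 0 < L)
    (v : Set ℝ → ℝ) (hv : LipVal L v)
    (x y : Fin n → ℝ) (hx : ∀ ℓ, x ℓ ∈ Icc (-1:ℝ) 1) (hy : ∀ ℓ, y ℓ ∈ Icc (-1:ℝ) 1)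
    (hclose : ‖x - y‖ ≤ ε / (2 * (n : ℝ) * L))
    (hDx : 0 ≤ v (paintPlus n x) - v (Icc (0:ℝ) 1 \ paintPlus n x))
    (hDy : v (paintPlus n y) - v (Icc (0:ℝ) 1 \ paintPlus n y) ≤ 0) :
    (0 ≤ v (paintPlus n x) - v (Icc (0:ℝ) 1 \ paintPlus n x) ∧
      v (paintPlus n x) - v (Icc (0:ℝ) 1 \ paintPlus n x) ≤ ε) ∧
    (-ε ≤ v (paintPlus n y) - v (Icc (0:ℝ) 1 \ paintPlus n y) ∧
      v (paintPlus n y) - v (Icc (0:ℝ) 1 \ paintPlus n y) ≤ 0) := by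
  set A := paintPlus n x with hA
  set B := paintPlus n y with hB
  set A' := Icc (0:ℝ) 1 \ A with hA'
  set B' := Icc (0:ℝ) 1 \ B with hB'
  have hsd : symmDiff A' B' = symmDiff A B :=
    mySdiff_symmDiff (paint_sub n x) (paint_sub n y)
  set m := (volume (symmDiff A B)).toReal with hm
  have e1 : |v A - v B| ≤ L * m :=
    hv A B (paint_sub n x) (paint_sub n y) (paint_meas n x) (paint_meas n y)
  have e2 : |v A' - v B'| ≤ L * m := by
    have := hv A' B' diff_subset diff_subset
      (measurableSet_Icc.diff (paint_meas n x)) (measurableSet_Icc.diff (paint_meas n y))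
    rwa [hsd] at this
  have hnpos : (0:ℝ) < n := by exact_mod_cast hn
  have hmb : m ≤ n * (ε / (2 * n * L)) := by
    have h1 : m ≤ ∑ ℓ, |x ℓ - y ℓ| := paint_measure_bound n x y
    have h2 : ∑ ℓ, |x ℓ - y ℓ| ≤ (n : ℝ) * ‖x - y‖ := by
      calc ∑ ℓ, |x ℓ - y ℓ| ≤ ∑ _ℓ : Fin n, ‖x - y‖ := by
            refine Finset.sum_le_sum fun ℓ _ => ?_
            have := norm_le_pi_norm (x - y) ℓ
            simpa [Real.norm_eq_abs] using this
        _ = (n : ℝ) * ‖x - y‖ := by simp [Finset.card_univ]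
    have h3 : (n : ℝ) * ‖x - y‖ ≤ n * (ε / (2 * n * L)) :=
      mul_le_mul_of_nonneg_left hclose hnpos.le
    linarith
  have hkey : 2 * L * m ≤ ε := by
    have h4 : 2 * L * m ≤ 2 * L * (n * (ε / (2 * n * L))) :=
      mul_le_mul_of_nonneg_left hmb (by positivity)
    have h5 : 2 * L * ((n : ℝ) * (ε / (2 * n * L))) = ε := by
      field_simp
    linarith
  have f1 : v A - v B ≤ L * m := (le_abs_self _).trans e1
  have f2 : -(L * m) ≤ v A' - v B' := le_trans (neg_le_neg e2) (neg_abs_le _)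
  refine ⟨⟨hDx, ?_⟩, ?_, hDy⟩ <;> linarith
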